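/- arXiv:2304.07562 — 4 statements merged into one kernel-verified Lean document; each statement's English description precedes it below -/
import Mathlib

section
/- For any ψ ∈ 𝒜, any t > 0, and any probability measures γ, γ̃ on ℝ^d with finite first moment, the ψ-distance satisfies 𝕎_ψ(γ, γ̃) ≤ √d · ψ(√t) · ‖γ − γ̃‖_var + (d·ψ(√t)/√t) · 𝕎₁(γ, γ̃). -/
open Set MeasureTheory

/-- Dual-type distance between measures induced by a class of test functions. -/
noncomputable def dualDist {E : Type*} [MeasurableSpace E]
    (S : Set (E → ℝ)) (μ ν : Measure E) : ℝ :=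
  sSup {x | ∃ f ∈ S, x = |(∫ y, f y ∂μ) - ∫ y, f y ∂ν|}

/-- The ψ-distance 𝕎_ψ. -/
noncomputable def Wpsi {E : Type*} [MeasurableSpace E] [NormedAddCommGroup E]
    (ψ : ℝ → ℝ) (μ ν : Measure E) : ℝ :=
  dualDist {f | ∀ x y, x ≠ y → |f x - f y| ≤ ψ ‖x - y‖} μ ν

/-- Total variation distance (sup over |f| ≤ 1). -/
noncomputable def varDist {E : Type*} [MeasurableSpace E] (μ ν : Measure E) : ℝ :=
  dualDist {f | Measurable f ∧ ∀ x, |f x| ≤ 1} μ ν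

/-- L¹-Wasserstein distance via Kantorovich duality. -/
noncomputable def W1 {E : Type*} [MeasurableSpace E] [NormedAddCommGroup E]
    (μ ν : Measure E) : ℝ :=
  dualDist {f | LipschitzWith 1 f} μ ν

section Aux

variable {d : ℕ}

local notation "Euc" => EuclideanSpace ℝ (Fin d)

/-- concave increasing ψ: linear upper bound. -/
lemma psi_linear_bound (ψ : ℝ → ℝ) (hmono : MonotoneOn ψ (Ici 0))
    (hconc : ConcaveOn ℝ (Ici 0) ψ) (h0 : 0 ≤ ψ 0)
    {s r : ℝ} (hs : 0 < s) (hr : 0 < r) :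
    ψ r ≤ ψ s + (ψ s / s) * r := by
  have hψs : 0 ≤ ψ s := h0.trans (hmono self_mem_Ici hs.le hs.le)
  rcases le_or_gt r s with h | h
  · have h1 : ψ r ≤ ψ s := hmono hr.le hs.le h
    have h2 : 0 ≤ (ψ s / s) * r := by positivity
    linarith
  · have hrr : (0:ℝ) < r := hr
    set a : ℝ := 1 - s / r with ha
    set b : ℝ := s / r with hb
    have hb0 : 0 ≤ b := by positivity
    have hb1 : b < 1 := by
      rw [hb, div_lt_one hrr]; exact h
    have ha0 : 0 ≤ a := by simp [ha]; linarith
    have hab : a + b = 1 := by ring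
    have hkey := hconc.2 (self_mem_Ici) (le_of_lt hrr : (0:ℝ) ≤ r) ha0 hb0 hab
    simp only [smul_eq_mul, mul_zero, zero_add] at hkey
    -- hkey : a * ψ 0 + b * ψ r ≤ ψ (b * r)
    have hbr : b * r = s := by
      rw [hb]; field_simp
    rw [hbr] at hkey
    have h3 : b * ψ r ≤ ψ s := by nlinarith
    have h4 : ψ r ≤ (ψ s / s) * r := by
      rw [div_mul_eq_mul_div, le_div_iff₀ hs]
      calc ψ r * s = (b * ψ r) * r := by rw [hb]; field_simp
        _ ≤ ψ s * r := by nlinarith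
    linarith

lemma bddAbove_varSet (μ ν : Measure Euc)
    [IsProbabilityMeasure μ] [IsProbabilityMeasure ν] :
    BddAbove {x | ∃ f ∈ {f : Euc → ℝ | Measurable f ∧ ∀ x, |f x| ≤ 1},
      x = |(∫ y, f y ∂μ) - ∫ y, f y ∂ν|} := by
  refine ⟨2, ?_⟩
  rintro x ⟨f, ⟨hfm, hfb⟩, rfl⟩
  have key : ∀ (κ : Measure Euc) [IsProbabilityMeasure κ], |∫ y, f y ∂κ| ≤ 1 := by
    intro κ _
    calc |∫ y, f y ∂κ| ≤ ∫ y, |f y| ∂κ := by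
          simpa [Real.norm_eq_abs] using norm_integral_le_integral_norm (μ := κ) f
      _ ≤ ∫ _, (1:ℝ) ∂κ := by
          refine integral_mono ?_ (integrable_const 1) (fun y => hfb y)
          refine (Integrable.mono' (integrable_const 1) hfm.abs.aestronglyMeasurable
            (ae_of_all _ fun y => ?_))
          simpa [Real.norm_eq_abs, abs_abs] using hfb y
      _ = 1 := by simp
  calc |(∫ y, f y ∂μ) - ∫ y, f y ∂ν| ≤ |∫ y, f y ∂μ| + |∫ y, f y ∂ν| := abs_sub _ _
    _ ≤ 1 + 1 := add_le_add (key μ) (key ν)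
    _ = 2 := by norm_num

lemma varDist_nonneg (μ ν : Measure Euc)
    [IsProbabilityMeasure μ] [IsProbabilityMeasure ν] : 0 ≤ varDist μ ν := by
  rw [varDist, dualDist]
  refine le_csSup (bddAbove_varSet μ ν) ?_
  exact ⟨fun _ => 0, ⟨measurable_const, fun x => by norm_num⟩, by simp⟩

lemma lip_integrable {f : Euc → ℝ} (hf : LipschitzWith 1 f)
    (κ : Measure Euc) [IsProbabilityMeasure κ]
    (hκ : Integrable (fun x => ‖x‖) κ) : Integrable f κ := by
  refine Integrable.mono' ((integrable_const (|f 0|)).add hκ)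
    hf.continuous.aestronglyMeasurable (ae_of_all _ fun x => ?_)
  have h1 : |f x - f 0| ≤ ‖x‖ := by
    have := hf.dist_le_mul x 0
    simpa [Real.dist_eq, dist_eq_norm] using this
  have : |f x| ≤ |f 0| + |f x - f 0| := by
    calc |f x| = |f 0 + (f x - f 0)| := by ring_nf
      _ ≤ |f 0| + |f x - f 0| := abs_add_le _ _
  show ‖f x‖ ≤ |f 0| + ‖x‖
  simp only [Real.norm_eq_abs]
  linarith

lemma bddAbove_W1Set (μ ν : Measure Euc)
    [IsProbabilityMeasure μ] [IsProbabilityMeasure ν]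
    (hμ : Integrable (fun x => ‖x‖) μ) (hν : Integrable (fun x => ‖x‖) ν) :
    BddAbove {x | ∃ f ∈ {f : Euc → ℝ | LipschitzWith 1 f},
      x = |(∫ y, f y ∂μ) - ∫ y, f y ∂ν|} := by
  refine ⟨(∫ x, ‖x‖ ∂μ) + ∫ x, ‖x‖ ∂ν, ?_⟩
  rintro x ⟨f, hf, rfl⟩
  have key : ∀ (κ : Measure Euc) [IsProbabilityMeasure κ], Integrable (fun x => ‖x‖) κ →
      |(∫ y, f y ∂κ) - f 0| ≤ ∫ x, ‖x‖ ∂κ := by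
    intro κ _ hκ
    have hint : Integrable f κ := lip_integrable hf κ hκ
    have h1 : (∫ y, f y ∂κ) - f 0 = ∫ y, (f y - f 0) ∂κ := by
      rw [integral_sub hint (integrable_const _)]
      simp
    rw [h1]
    calc |∫ y, (f y - f 0) ∂κ| ≤ ∫ y, |f y - f 0| ∂κ := by
          simpa [Real.norm_eq_abs] using
            norm_integral_le_integral_norm (μ := κ) (fun y => f y - f 0)
      _ ≤ ∫ y, ‖y‖ ∂κ := by
          refine integral_mono ((hint.sub (integrable_const _)).abs) hκ (fun y => ?_)
          have := hf.dist_le_mul y 0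
          simpa [Real.dist_eq, dist_eq_norm] using this
  have h2 := key μ hμ
  have h3 := key ν hν
  calc |(∫ y, f y ∂μ) - ∫ y, f y ∂ν|
      = |((∫ y, f y ∂μ) - f 0) - ((∫ y, f y ∂ν) - f 0)| := by ring_nf
    _ ≤ |(∫ y, f y ∂μ) - f 0| + |(∫ y, f y ∂ν) - f 0| := abs_sub _ _
    _ ≤ (∫ x, ‖x‖ ∂μ) + ∫ x, ‖x‖ ∂ν := add_le_add h2 h3

lemma W1_nonneg (μ ν : Measure Euc)
    [IsProbabilityMeasure μ] [IsProbabilityMeasure ν]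
    (hμ : Integrable (fun x => ‖x‖) μ) (hν : Integrable (fun x => ‖x‖) ν) :
    0 ≤ W1 μ ν := by
  rw [W1, dualDist]
  refine le_csSup (bddAbove_W1Set μ ν hμ hν) ?_
  exact ⟨fun _ => 0, (LipschitzWith.const 0).weaken zero_le_one, by simp⟩

end Aux
section Core

variable {d : ℕ}

local notation "Euc" => EuclideanSpace ℝ (Fin d)

lemma good_f_bound (μ ν : Measure Euc) [IsProbabilityMeasure μ] [IsProbabilityMeasure ν]
    (hμ : Integrable (fun x => ‖x‖) μ) (hν : Integrable (fun x => ‖x‖) ν)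
    {P s : ℝ} (hs : 0 < s) (hP : 0 < P)
    {f : Euc → ℝ} (hf : ∀ x y : Euc, |f x - f y| ≤ P + (P / s) * ‖x - y‖)
    (hfμ : AEStronglyMeasurable f μ) (hfν : AEStronglyMeasurable f ν) :
    |(∫ y, f y ∂μ) - ∫ y, f y ∂ν| ≤ (P / 2) * varDist μ ν + (P / s) * W1 μ ν := by
  set L : ℝ := P / s with hLdef
  have hL : 0 < L := div_pos hP hs
  -- infimal convolution
  set F : Euc → Euc → ℝ := fun x y => f y + L * ‖x - y‖ with hFdef
  have hbdd : ∀ x : Euc, BddBelow (Set.range (F x)) := by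
    intro x
    refine ⟨f x - P, ?_⟩
    rintro _ ⟨y, rfl⟩
    have h1 : f x - f y ≤ P + L * ‖x - y‖ := (le_abs_self _).trans (hf x y)
    simp only [hFdef]
    linarith
  set g : Euc → ℝ := fun x => ⨅ y, F x y with hgdef
  have hg_le : ∀ x, g x ≤ f x := by
    intro x
    have := ciInf_le (hbdd x) x
    simpa [hgdef, hFdef] using this
  have hg_ge : ∀ x, f x - P ≤ g x := by
    intro x
    refine le_ciInf fun y => ?_
    have h1 : f x - f y ≤ P + L * ‖x - y‖ := (le_abs_self _).trans (hf x y)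
    simp only [hFdef]
    linarith
  have hg_lip1 : ∀ x x' : Euc, g x ≤ g x' + L * ‖x - x'‖ := by
    intro x x'
    have step : ∀ y, g x - L * ‖x - x'‖ ≤ F x' y := by
      intro y
      have h1 : g x ≤ F x y := ciInf_le (hbdd x) y
      have h2 : ‖x - y‖ ≤ ‖x - x'‖ + ‖x' - y‖ := by
        have := dist_triangle x x' y
        simpa [dist_eq_norm] using this
      have h3 : F x y ≤ F x' y + L * ‖x - x'‖ := by
        simp only [hFdef]
        nlinarith
      linarith
    have := le_ciInf step
    have h4 : g x - L * ‖x - x'‖ ≤ g x' := this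
    linarith
  have hg_lipabs : ∀ x x' : Euc, |g x - g x'| ≤ L * ‖x - x'‖ := by
    intro x x'
    rw [abs_sub_le_iff]
    constructor
    · linarith [hg_lip1 x x']
    · have := hg_lip1 x' x
      rw [norm_sub_rev] at this
      linarith
  have hglip : LipschitzWith L.toNNReal g := by
    refine LipschitzWith.of_dist_le_mul fun x y => ?_
    rw [Real.dist_eq, dist_eq_norm]
    rw [Real.coe_toNNReal _ hL.le]
    exact hg_lipabs x y
  have hgc : Continuous g := hglip.continuous
  -- integrability
  have hfabs : ∀ x : Euc, |f x| ≤ (|f 0| + P) + L * ‖x‖ := by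
    intro x
    have h1 : |f x - f 0| ≤ P + L * ‖x‖ := by simpa using hf x 0
    have h2 : |f x| ≤ |f 0| + |f x - f 0| := by
      calc |f x| = |f 0 + (f x - f 0)| := by ring_nf
        _ ≤ |f 0| + |f x - f 0| := abs_add_le _ _
    linarith
  have hgabs : ∀ x : Euc, |g x| ≤ |g 0| + L * ‖x‖ := by
    intro x
    have h1 : |g x - g 0| ≤ L * ‖x‖ := by simpa using hg_lipabs x 0
    have h2 : |g x| ≤ |g 0| + |g x - g 0| := by
      calc |g x| = |g 0 + (g x - g 0)| := by ring_nf
        _ ≤ |g 0| + |g x - g 0| := abs_add_le _ _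
    linarith
  have hfint : ∀ (κ : Measure Euc) [IsProbabilityMeasure κ], Integrable (fun x => ‖x‖) κ →
      AEStronglyMeasurable f κ → Integrable f κ := by
    intro κ _ hκ hm
    refine Integrable.mono' ((integrable_const (|f 0| + P)).add (hκ.const_mul L)) hm
      (ae_of_all _ fun x => ?_)
    show ‖f x‖ ≤ (|f 0| + P) + L * ‖x‖
    simpa [Real.norm_eq_abs] using hfabs x
  have hgint : ∀ (κ : Measure Euc) [IsProbabilityMeasure κ], Integrable (fun x => ‖x‖) κ →
      Integrable g κ := by
    intro κ _ hκ
    refine Integrable.mono' ((integrable_const (|g 0|)).add (hκ.const_mul L))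
      hgc.aestronglyMeasurable (ae_of_all _ fun x => ?_)
    show ‖g x‖ ≤ |g 0| + L * ‖x‖
    simpa [Real.norm_eq_abs] using hgabs x
  have hfiμ : Integrable f μ := hfint μ hμ hfμ
  have hfiν : Integrable f ν := hfint ν hν hfν
  have hgiμ : Integrable g μ := hgint μ hμ
  have hgiν : Integrable g ν := hgint ν hν
  -- bounded part
  set h : Euc → ℝ := fun x => f x - g x - P / 2 with hhdef
  have hhabs : ∀ x, |h x| ≤ P / 2 := by
    intro x
    rw [abs_le]
    constructor
    · have := hg_le x; simp only [hhdef]; linarith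
    · have := hg_ge x; simp only [hhdef]; linarith
  have hhiμ : Integrable h μ := (hfiμ.sub hgiμ).sub (integrable_const _)
  have hhiν : Integrable h ν := (hfiν.sub hgiν).sub (integrable_const _)
  -- integral split
  have hsplit : ∀ (κ : Measure Euc) [IsProbabilityMeasure κ], Integrable f κ → Integrable g κ →
      (∫ y, f y ∂κ) = (∫ y, g y ∂κ) + (∫ y, h y ∂κ) + P / 2 := by
    intro κ _ hfi hgi
    have hhi : Integrable h κ := (hfi.sub hgi).sub (integrable_const _)
    calc (∫ y, f y ∂κ) = ∫ y, (g y + (h y + P / 2)) ∂κ := by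
          refine integral_congr_ae (ae_of_all _ fun y => ?_)
          simp only [hhdef]; ring
      _ = (∫ y, g y ∂κ) + ∫ y, (h y + P / 2) ∂κ :=
          integral_add hgi (hhi.add (integrable_const _))
      _ = (∫ y, g y ∂κ) + ((∫ y, h y ∂κ) + P / 2) := by
          rw [integral_add hhi (integrable_const _)]; simp
      _ = (∫ y, g y ∂κ) + (∫ y, h y ∂κ) + P / 2 := by ring
  have hμs := hsplit μ hfiμ hgiμ
  have hνs := hsplit ν hfiν hgiν
  -- Lipschitz part bound via W1
  have hgW1 : |(∫ y, g y ∂μ) - ∫ y, g y ∂ν| ≤ L * W1 μ ν := by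
    set g₁ : Euc → ℝ := fun x => L⁻¹ * g x with hg1def
    have hg1lip : LipschitzWith 1 g₁ := by
      refine LipschitzWith.of_dist_le_mul fun x y => ?_
      rw [Real.dist_eq, dist_eq_norm]
      have : |g₁ x - g₁ y| = L⁻¹ * |g x - g y| := by
        rw [hg1def]
        rw [← mul_sub, abs_mul, abs_of_nonneg (inv_nonneg.mpr hL.le)]
      rw [this]
      have := hg_lipabs x y
      calc L⁻¹ * |g x - g y| ≤ L⁻¹ * (L * ‖x - y‖) := by
            exact mul_le_mul_of_nonneg_left this (inv_nonneg.mpr hL.le)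
        _ = ‖x - y‖ := by field_simp
        _ ≤ ↑(1:NNReal) * ‖x - y‖ := by simp
    have hmem : |(∫ y, g₁ y ∂μ) - ∫ y, g₁ y ∂ν| ∈
        {x | ∃ f ∈ {f : Euc → ℝ | LipschitzWith 1 f}, x = |(∫ y, f y ∂μ) - ∫ y, f y ∂ν|} :=
      ⟨g₁, hg1lip, rfl⟩
    have hle : |(∫ y, g₁ y ∂μ) - ∫ y, g₁ y ∂ν| ≤ W1 μ ν := by
      rw [W1, dualDist]
      exact le_csSup (bddAbove_W1Set μ ν hμ hν) hmem
    have hint1 : ∀ (κ : Measure Euc), (∫ y, g₁ y ∂κ) = L⁻¹ * ∫ y, g y ∂κ := by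
      intro κ
      simp only [hg1def]
      exact integral_const_mul L⁻¹ g
    have : |(∫ y, g y ∂μ) - ∫ y, g y ∂ν| = L * |(∫ y, g₁ y ∂μ) - ∫ y, g₁ y ∂ν| := by
      rw [hint1, hint1, ← mul_sub, abs_mul, abs_of_nonneg (inv_nonneg.mpr hL.le)]
      field_simp
    rw [this]
    exact mul_le_mul_of_nonneg_left hle hL.le
  -- bounded part bound via varDist
  have hhvar : |(∫ y, h y ∂μ) - ∫ y, h y ∂ν| ≤ (P / 2) * varDist μ ν := by
    set h₁ : Euc → ℝ := fun x => (P / 2)⁻¹ * h x with hh1def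
    have hh1b : ∀ x, |h₁ x| ≤ 1 := by
      intro x
      rw [hh1def]
      have h2 : (0:ℝ) < P / 2 := by linarith
      rw [abs_mul, abs_of_nonneg (inv_nonneg.mpr h2.le)]
      rw [inv_mul_le_iff₀ h2, mul_one]
      exact hhabs x
    have hh1mμ : AEStronglyMeasurable h₁ μ :=
      (((hfμ.sub hgc.aestronglyMeasurable).sub aestronglyMeasurable_const).const_mul _)
    have hh1mν : AEStronglyMeasurable h₁ ν :=
      (((hfν.sub hgc.aestronglyMeasurable).sub aestronglyMeasurable_const).const_mul _)
    have hh1sum : AEStronglyMeasurable h₁ (μ + ν) :=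
      aestronglyMeasurable_add_measure_iff.mpr ⟨hh1mμ, hh1mν⟩
    set k : Euc → ℝ := hh1sum.mk h₁ with hkdef
    have hkm : StronglyMeasurable k := hh1sum.stronglyMeasurable_mk
    have hkeq : h₁ =ᵐ[μ + ν] k := hh1sum.ae_eq_mk
    set k' : Euc → ℝ := fun x => max (-1) (min 1 (k x)) with hk'def
    have hk'm : Measurable k' :=
      measurable_const.max (measurable_const.min hkm.measurable)
    have hk'b : ∀ x, |k' x| ≤ 1 := by
      intro x
      rw [abs_le]
      refine ⟨le_max_left _ _, max_le (by norm_num) ((min_le_left _ _))⟩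
    have hclamp : ∀ x, h₁ x = k x → h₁ x = k' x := by
      intro x hx
      have hb := abs_le.mp (hh1b x)
      simp only [hk'def, ← hx]
      rw [min_eq_right hb.2, max_eq_right hb.1]
    have heqμ : h₁ =ᵐ[μ] k' := by
      have h1 : h₁ =ᵐ[μ] k := hkeq.filter_mono (ae_mono (Measure.le_add_right le_rfl))
      exact h1.mono fun x hx => hclamp x hx
    have heqν : h₁ =ᵐ[ν] k' := by
      have h1 : h₁ =ᵐ[ν] k := hkeq.filter_mono (ae_mono (Measure.le_add_left le_rfl))
      exact h1.mono fun x hx => hclamp x hx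
    have hmem : |(∫ y, k' y ∂μ) - ∫ y, k' y ∂ν| ∈
        {x | ∃ f ∈ {f : Euc → ℝ | Measurable f ∧ ∀ x, |f x| ≤ 1},
          x = |(∫ y, f y ∂μ) - ∫ y, f y ∂ν|} :=
      ⟨k', ⟨hk'm, hk'b⟩, rfl⟩
    have hle : |(∫ y, k' y ∂μ) - ∫ y, k' y ∂ν| ≤ varDist μ ν := by
      rw [varDist, dualDist]
      exact le_csSup (bddAbove_varSet μ ν) hmem
    have hPh : (0:ℝ) < P / 2 := by linarith
    have hint1 : ∀ (κ : Measure Euc), (∫ y, h₁ y ∂κ) = (P / 2)⁻¹ * ∫ y, h y ∂κ := by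
      intro κ
      simp only [hh1def]
      exact integral_const_mul _ h
    have hiμ : (∫ y, k' y ∂μ) = (P / 2)⁻¹ * ∫ y, h y ∂μ := by
      rw [← integral_congr_ae heqμ]; exact hint1 μ
    have hiν : (∫ y, k' y ∂ν) = (P / 2)⁻¹ * ∫ y, h y ∂ν := by
      rw [← integral_congr_ae heqν]; exact hint1 ν
    have hkey : |(∫ y, h y ∂μ) - ∫ y, h y ∂ν| = (P / 2) * |(∫ y, k' y ∂μ) - ∫ y, k' y ∂ν| := by
      rw [hiμ, hiν, ← mul_sub, abs_mul, abs_of_nonneg (inv_nonneg.mpr hPh.le)]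
      field_simp
    rw [hkey]
    exact mul_le_mul_of_nonneg_left hle hPh.le
  calc |(∫ y, f y ∂μ) - ∫ y, f y ∂ν|
      = |((∫ y, g y ∂μ) - ∫ y, g y ∂ν) + ((∫ y, h y ∂μ) - ∫ y, h y ∂ν)| := by
        rw [hμs, hνs]; congr 1; ring
    _ ≤ |(∫ y, g y ∂μ) - ∫ y, g y ∂ν| + |(∫ y, h y ∂μ) - ∫ y, h y ∂ν| := abs_add_le _ _
    _ ≤ L * W1 μ ν + (P / 2) * varDist μ ν := add_le_add hgW1 hhvar
    _ = (P / 2) * varDist μ ν + (P / s) * W1 μ ν := by rw [hLdef]; ring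

end Core
section Main

variable {d : ℕ}

local notation "Euc" => EuclideanSpace ℝ (Fin d)

lemma wpsi_set_not_bddAbove (ψ : ℝ → ℝ) (μ ν : Measure Euc) [IsProbabilityMeasure ν]
    {f : Euc → ℝ} (hf : ∀ x y : Euc, x ≠ y → |f x - f y| ≤ ψ ‖x - y‖)
    (hfμ : ¬ AEStronglyMeasurable f μ) (hfint : Integrable f ν) :
    ¬ BddAbove {x | ∃ f ∈ {f : Euc → ℝ | ∀ x y, x ≠ y → |f x - f y| ≤ ψ ‖x - y‖},
      x = |(∫ y, f y ∂μ) - ∫ y, f y ∂ν|} := by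
  rintro ⟨b, hb⟩
  set c : ℝ := |b| + |∫ y, f y ∂ν| + 1 with hcdef
  have hmem : |(∫ y, (f y + c) ∂μ) - ∫ y, (f y + c) ∂ν| ∈
      {x | ∃ f ∈ {f : Euc → ℝ | ∀ x y, x ≠ y → |f x - f y| ≤ ψ ‖x - y‖},
        x = |(∫ y, f y ∂μ) - ∫ y, f y ∂ν|} := by
    refine ⟨fun x => f x + c, fun x y hxy => ?_, rfl⟩
    simpa using hf x y hxy
  have h1 : (∫ y, (f y + c) ∂μ) = 0 := by
    refine integral_undef fun hi => hfμ ?_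
    have h := hi.1.sub (aestronglyMeasurable_const (b := c))
    have he : ((fun y => f y + c) - fun _ => c) = f := by
      funext y; simp
    rwa [he] at h
  have h2 : (∫ y, (f y + c) ∂ν) = (∫ y, f y ∂ν) + c := by
    rw [integral_add hfint (integrable_const c), integral_const]
    simp
  have h3 := hb hmem
  rw [h1, h2, zero_sub, abs_neg] at h3
  have h4 : c - |∫ y, f y ∂ν| ≤ |(∫ y, f y ∂ν) + c| := by
    have := neg_abs_le (∫ y, f y ∂ν)
    have := le_abs_self ((∫ y, f y ∂ν) + c)
    linarith
  have h5 := le_abs_self b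
  rw [hcdef] at h4
  linarith

end Main

theorem Wpsi_le_var_add_W1 (d : ℕ) (hd : 1 ≤ d)
    (ψ : ℝ → ℝ)
    (hmono : MonotoneOn ψ (Ici 0))
    (hconc : ConcaveOn ℝ (Ici 0) ψ)
    (hpos : ∀ r > (0:ℝ), 0 < ψ r) (h0 : 0 ≤ ψ 0)
    (μ ν : Measure (EuclideanSpace ℝ (Fin d)))
    [IsProbabilityMeasure μ] [IsProbabilityMeasure ν]
    (hμ : Integrable (fun x => ‖x‖) μ) (hν : Integrable (fun x => ‖x‖) ν) :
    ∀ t > (0:ℝ),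
      Wpsi ψ μ ν ≤ Real.sqrt d * ψ (Real.sqrt t) * varDist μ ν
        + (d * ψ (Real.sqrt t) / Real.sqrt t) * W1 μ ν := by
  intro t ht
  set s : ℝ := Real.sqrt t with hsdef
  have hs : 0 < s := Real.sqrt_pos.mpr ht
  have hP : 0 < ψ s := hpos s hs
  set P : ℝ := ψ s with hPdef
  have hvar0 : 0 ≤ varDist μ ν := varDist_nonneg μ ν
  have hW10 : 0 ≤ W1 μ ν := W1_nonneg μ ν hμ hν
  have hd1 : (1:ℝ) ≤ Real.sqrt d := by
    rw [show (1:ℝ) = Real.sqrt 1 by simp]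
    exact Real.sqrt_le_sqrt (by exact_mod_cast hd)
  have hdd : (1:ℝ) ≤ (d:ℝ) := by exact_mod_cast hd
  have hRHSnn : 0 ≤ Real.sqrt d * P * varDist μ ν + ((d:ℝ) * P / s) * W1 μ ν := by
    have h1 : (0:ℝ) ≤ Real.sqrt d * P := by positivity
    have h2 : (0:ℝ) ≤ (d:ℝ) * P / s := by positivity
    exact add_nonneg (mul_nonneg h1 hvar0) (mul_nonneg h2 hW10)
  have hRHS : (P / 2) * varDist μ ν + (P / s) * W1 μ ν
      ≤ Real.sqrt d * P * varDist μ ν + ((d:ℝ) * P / s) * W1 μ ν := by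
    have h1 : P / 2 ≤ Real.sqrt d * P := by nlinarith
    have h2 : P / s ≤ (d:ℝ) * P / s := by
      have hPd : P ≤ (d:ℝ) * P := by nlinarith
      exact (div_le_div_iff_of_pos_right hs).mpr hPd

    exact add_le_add (mul_le_mul_of_nonneg_right h1 hvar0)
      (mul_le_mul_of_nonneg_right h2 hW10)
  -- pointwise bound derived from class membership
  have hfb_of : ∀ f : EuclideanSpace ℝ (Fin d) → ℝ,
      (∀ x y, x ≠ y → |f x - f y| ≤ ψ ‖x - y‖) →
      ∀ x y, |f x - f y| ≤ P + (P / s) * ‖x - y‖ := by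
    intro f hf x y
    by_cases hxy : x = y
    · subst hxy
      simp only [sub_self, abs_zero]
      positivity
    · have h1 := hf x y hxy
      have hr : 0 < ‖x - y‖ := by
        rw [norm_pos_iff, sub_ne_zero]
        exact hxy
      exact h1.trans (psi_linear_bound ψ hmono hconc h0 hs hr)
  rw [Wpsi, dualDist]
  by_cases hbad : ∃ f : EuclideanSpace ℝ (Fin d) → ℝ,
      (∀ x y, x ≠ y → |f x - f y| ≤ ψ ‖x - y‖) ∧
      ¬(AEStronglyMeasurable f μ ↔ AEStronglyMeasurable f ν)
  · obtain ⟨f, hfcl, hiff⟩ := hbad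
    have hfb := hfb_of f hfcl
    have hintegr : ∀ (κ : Measure (EuclideanSpace ℝ (Fin d))) [IsProbabilityMeasure κ],
        Integrable (fun x => ‖x‖) κ → AEStronglyMeasurable f κ → Integrable f κ := by
      intro κ _ hκ hm
      refine Integrable.mono' ((integrable_const (|f 0| + P)).add (hκ.const_mul (P / s))) hm
        (ae_of_all _ fun x => ?_)
      show ‖f x‖ ≤ (|f 0| + P) + (P / s) * ‖x‖
      have h1 : |f x - f 0| ≤ P + (P / s) * ‖x‖ := by simpa using hfb x 0
      have h2 : |f x| ≤ |f 0| + |f x - f 0| := by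
        calc |f x| = |f 0 + (f x - f 0)| := by ring_nf
          _ ≤ |f 0| + |f x - f 0| := abs_add_le _ _
      simp only [Real.norm_eq_abs]
      linarith
    by_cases hA : AEStronglyMeasurable f μ
    · -- then ¬ AESM f ν
      have hB : ¬ AEStronglyMeasurable f ν := fun h => hiff ⟨fun _ => h, fun _ => hA⟩
      have hnb := wpsi_set_not_bddAbove ψ ν μ hfcl hB (hintegr μ hμ hA)
      have hset : {x | ∃ f ∈ {f : EuclideanSpace ℝ (Fin d) → ℝ |
            ∀ x y, x ≠ y → |f x - f y| ≤ ψ ‖x - y‖},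
          x = |(∫ y, f y ∂μ) - ∫ y, f y ∂ν|} =
          {x | ∃ f ∈ {f : EuclideanSpace ℝ (Fin d) → ℝ |
            ∀ x y, x ≠ y → |f x - f y| ≤ ψ ‖x - y‖},
          x = |(∫ y, f y ∂ν) - ∫ y, f y ∂μ|} := by
        ext x
        constructor <;> rintro ⟨f, hf, rfl⟩ <;> exact ⟨f, hf, abs_sub_comm _ _⟩
      rw [hset, Real.sSup_of_not_bddAbove hnb]
      exact hRHSnn
    · have hB : AEStronglyMeasurable f ν := by
        by_contra hB
        exact hiff ⟨fun h => absurd h hA, fun h => absurd h hB⟩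
      have hnb := wpsi_set_not_bddAbove ψ μ ν hfcl hA (hintegr ν hν hB)
      rw [Real.sSup_of_not_bddAbove hnb]
      exact hRHSnn
  · push_neg at hbad
    refine Real.sSup_le ?_ hRHSnn
    rintro x ⟨f, hfcl, rfl⟩
    have hiff := hbad f hfcl
    by_cases hA : AEStronglyMeasurable f μ
    · have hB : AEStronglyMeasurable f ν := hiff.mp hA
      have := good_f_bound μ ν hμ hν hs hP (hfb_of f hfcl) hA hB
      linarith
    · have hB : ¬ AEStronglyMeasurable f ν := fun h => hA (hiff.mpr h)
      rw [integral_undef (fun hi => hA hi.1), integral_undef (fun hi => hB hi.1)]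
      simpa using hRHSnn
end

section
/- Let ψ ∈ 𝒜. Then for every s > 0, ∫₀^s [ψ(r^{1/2})·ψ((s−r)^{1/2})/(r·√(s−r))] · (√s/ψ(√s)) dr ≤ 2(2+√2) ∫₀^{√(s/2)} ψ(r)/r dr. -/
open Set MeasureTheory

private lemma sq_deriv {a : ℝ} :
    ∀ x ∈ Ioo (0:ℝ) a, HasDerivWithinAt (fun u : ℝ => u^2) (2*x) (Ioo 0 a) x := by
  intro x _
  have := (hasDerivAt_pow 2 x).hasDerivWithinAt (s := Ioo (0:ℝ) a)
  simpa [mul_comm] using this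

private lemma sq_inj {a : ℝ} : InjOn (fun u : ℝ => u^2) (Ioo 0 a) := by
  intro x hx y hy h
  simp only at h
  nlinarith [hx.1, hy.1]

private lemma sq_image {a : ℝ} (ha : 0 ≤ a) :
    (fun u : ℝ => u^2) '' Ioo 0 a = Ioo 0 (a^2) := by
  ext y
  constructor
  · rintro ⟨u, hu, rfl⟩
    show u^2 ∈ Ioo 0 (a^2)
    constructor
    · nlinarith [hu.1]
    · nlinarith [hu.1, hu.2]
  · rintro ⟨hy1, hy2⟩
    refine ⟨Real.sqrt y, ⟨Real.sqrt_pos.2 hy1, ?_⟩, Real.sq_sqrt hy1.le⟩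
    calc Real.sqrt y < Real.sqrt (a^2) := Real.sqrt_lt_sqrt hy1.le hy2
    _ = a := Real.sqrt_sq ha

private lemma cv_eq {a : ℝ} (ha : 0 ≤ a) (g : ℝ → ℝ) :
    (∫ r in (0:ℝ)..a^2, g r) = ∫ u in (0:ℝ)..a, 2*u*g (u^2) := by
  rw [intervalIntegral.integral_of_le (by positivity), intervalIntegral.integral_of_le ha,
    integral_Ioc_eq_integral_Ioo, integral_Ioc_eq_integral_Ioo, ← sq_image ha,
    integral_image_eq_integral_abs_deriv_smul measurableSet_Ioo sq_deriv sq_inj]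
  refine setIntegral_congr_fun measurableSet_Ioo fun u hu => ?_
  rw [smul_eq_mul, abs_of_pos (by linarith [hu.1] : (0:ℝ) < 2*u)]

private lemma cv_int {a : ℝ} (ha : 0 ≤ a) (g : ℝ → ℝ) :
    IntervalIntegrable g volume 0 (a^2) ↔
      IntervalIntegrable (fun u => 2*u*g (u^2)) volume 0 a := by
  rw [intervalIntegrable_iff_integrableOn_Ioc_of_le (by positivity),
    intervalIntegrable_iff_integrableOn_Ioc_of_le ha,
    integrableOn_Ioc_iff_integrableOn_Ioo, integrableOn_Ioc_iff_integrableOn_Ioo,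
    ← sq_image ha,
    integrableOn_image_iff_integrableOn_abs_deriv_smul measurableSet_Ioo sq_deriv sq_inj]
  exact integrableOn_congr_fun
    (fun u hu => by rw [smul_eq_mul, abs_of_pos (by linarith [hu.1] : (0:ℝ) < 2*u)])
    measurableSet_Ioo

theorem dini_splitting_estimate
    (ψ : ℝ → ℝ)
    (hmono : MonotoneOn ψ (Ici 0))
    (hconc : ConcaveOn ℝ (Ici 0) ψ)
    (hpos : ∀ r > (0:ℝ), 0 < ψ r) (h0 : 0 ≤ ψ 0) :
    ∀ s > (0:ℝ),
      (∫ r in (0:ℝ)..s,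
          ψ (Real.sqrt r) * ψ (Real.sqrt (s - r)) / (r * Real.sqrt (s - r))
            * (Real.sqrt s / ψ (Real.sqrt s)))
        ≤ 2 * (2 + Real.sqrt 2) * ∫ r in (0:ℝ)..Real.sqrt (s / 2), ψ r / r := by
  intro s hs
  set x := Real.sqrt s with hxdef
  set a := Real.sqrt (s/2) with hadef
  have hx : 0 < x := Real.sqrt_pos.2 hs
  have ha : 0 < a := Real.sqrt_pos.2 (by linarith)
  have ha2 : a^2 = s/2 := Real.sq_sqrt (by linarith)
  have hx2 : x^2 = s := Real.sq_sqrt hs.le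
  have hax : a ≤ x := Real.sqrt_le_sqrt (by linarith)
  have hψx : 0 < ψ x := hpos x hx
  have hψa : 0 < ψ a := hpos a ha
  have hψnn : ∀ r : ℝ, 0 ≤ r → 0 ≤ ψ r := fun r hr =>
    le_trans h0 (hmono (le_refl (0:ℝ)) hr hr)
  have hsqrt2a : Real.sqrt 2 * a = x := by
    rw [hadef, hxdef, ← Real.sqrt_mul (by norm_num : (0:ℝ) ≤ 2)]
    congr 1
    ring
  -- monotone / measurable auxiliaries
  have hmsq : Monotone (fun r : ℝ => ψ (Real.sqrt r)) := fun r r' hrr' =>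
    hmono (Real.sqrt_nonneg r) (Real.sqrt_nonneg r') (Real.sqrt_le_sqrt hrr')
  have hmeas1 : Measurable (fun r : ℝ => ψ (Real.sqrt r)) := hmsq.measurable
  have hmeasG : Measurable (fun r : ℝ => ψ (Real.sqrt r) / r) :=
    hmeas1.div measurable_id
  set F : ℝ → ℝ := fun r =>
    ψ (Real.sqrt r) * ψ (Real.sqrt (s - r)) / (r * Real.sqrt (s - r)) * (x / ψ x) with hFdef
  -- RHS integral is nonnegative
  have hInn : 0 ≤ ∫ u in (0:ℝ)..a, ψ u / u := by
    apply intervalIntegral.integral_nonneg ha.le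
    intro u hu
    rcases eq_or_lt_of_le hu.1 with h | h
    · rw [← h]; simp
    · exact div_nonneg (hψnn u h.le) h.le
  by_cases hF0 : IntervalIntegrable F volume 0 s
  swap
  · rw [intervalIntegral.integral_undef hF0]
    have : (0:ℝ) ≤ 2 * (2 + Real.sqrt 2) := by positivity
    exact mul_nonneg this hInn
  have hF1 : IntervalIntegrable F volume 0 (s/2) := by
    apply hF0.mono_set
    rw [uIcc_of_le (by linarith : (0:ℝ) ≤ s/2), uIcc_of_le (by linarith : (0:ℝ) ≤ s)]
    exact Icc_subset_Icc le_rfl (by linarith)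
  have hF2 : IntervalIntegrable F volume (s/2) s := by
    apply hF0.mono_set
    rw [uIcc_of_le (by linarith : s/2 ≤ s), uIcc_of_le (by linarith : (0:ℝ) ≤ s)]
    exact Icc_subset_Icc (by linarith) le_rfl
  -- Step 1: integrability of ψ(√r)/r on (0, s/2]
  have hψrOn : IntegrableOn (fun r => ψ (Real.sqrt r) / r) (Ioc 0 (s/2)) := by
    have hFi : IntegrableOn F (Ioc 0 (s/2)) :=
      (intervalIntegrable_iff_integrableOn_Ioc_of_le (by linarith)).1 hF1
    refine Integrable.mono' (hFi.const_mul (ψ x / ψ a))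
      hmeasG.aestronglyMeasurable.restrict ?_
    rw [ae_restrict_iff' measurableSet_Ioc]
    filter_upwards with r hr
    have hr0 : 0 < r := hr.1
    have hd : a ≤ Real.sqrt (s - r) := Real.sqrt_le_sqrt (by linarith [hr.2])
    have hd0 : 0 < Real.sqrt (s - r) := lt_of_lt_of_le ha hd
    have hdx : Real.sqrt (s - r) ≤ x := Real.sqrt_le_sqrt (by linarith)
    have hq : ψ a ≤ ψ (Real.sqrt (s - r)) := hmono ha.le (Real.sqrt_nonneg _) hd
    have hq' : ψ (Real.sqrt (s - r)) ≤ ψ x := hmono (Real.sqrt_nonneg _) hx.le hdx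
    have hp : 0 ≤ ψ (Real.sqrt r) := hψnn _ (Real.sqrt_nonneg r)
    rw [Real.norm_eq_abs, abs_of_nonneg (div_nonneg hp hr0.le)]
    show ψ (Real.sqrt r) / r ≤ ψ x / ψ a *
      (ψ (Real.sqrt r) * ψ (Real.sqrt (s - r)) / (r * Real.sqrt (s - r)) * (x / ψ x))
    rw [div_mul_div_comm, div_mul_div_comm,
      div_le_div_iff₀ hr0 (by positivity)]
    have h1 : ψ a * Real.sqrt (s - r) ≤ ψ (Real.sqrt (s - r)) * x :=
      mul_le_mul hq hdx hd0.le (hψnn _ (Real.sqrt_nonneg _))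
    nlinarith [mul_le_mul_of_nonneg_left h1
      (mul_nonneg (mul_nonneg hp hr0.le) hψx.le)]
  have hψrI : IntervalIntegrable (fun r => ψ (Real.sqrt r) / r) volume 0 (s/2) :=
    (intervalIntegrable_iff_integrableOn_Ioc_of_le (by linarith)).2 hψrOn
  -- Step 2: Dini integrability
  have h2u : IntegrableOn (fun u => 2*u*(ψ (Real.sqrt (u^2)) / u^2)) (Ioc 0 a) := by
    have := (cv_int ha.le (fun r => ψ (Real.sqrt r) / r)).1 (by rw [ha2]; exact hψrI)
    exact (intervalIntegrable_iff_integrableOn_Ioc_of_le ha.le).1 this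
  have hIon : IntegrableOn (fun u => ψ u / u) (Ioc 0 a) := by
    have h2 : IntegrableOn (fun u => (2:ℝ)⁻¹ * (2*u*(ψ (Real.sqrt (u^2)) / u^2)))
        (Ioc 0 a) := h2u.const_mul _
    refine (integrableOn_congr_fun (fun u hu => ?_) measurableSet_Ioc).2 h2
    have hu0 : u ≠ 0 := ne_of_gt hu.1
    rw [Real.sqrt_sq hu.1.le]
    field_simp
  have hI : IntervalIntegrable (fun u => ψ u / u) volume 0 a :=
    (intervalIntegrable_iff_integrableOn_Ioc_of_le ha.le).2 hIon
  -- Piece 1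
  have hP1 : (∫ r in (0:ℝ)..(s/2), F r) ≤ 2 * Real.sqrt 2 * ∫ u in (0:ℝ)..a, ψ u / u := by
    have hb : (∫ r in (0:ℝ)..(s/2), F r)
        ≤ ∫ r in (0:ℝ)..(s/2), Real.sqrt 2 * (ψ (Real.sqrt r) / r) := by
      rw [intervalIntegral.integral_of_le (by linarith : (0:ℝ) ≤ s/2),
        intervalIntegral.integral_of_le (by linarith : (0:ℝ) ≤ s/2)]
      refine setIntegral_mono_on
        ((intervalIntegrable_iff_integrableOn_Ioc_of_le (by linarith)).1 hF1)
        (hψrOn.const_mul _) measurableSet_Ioc fun r hr => ?_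
      have hr0 : 0 < r := hr.1
      have hd : a ≤ Real.sqrt (s - r) := Real.sqrt_le_sqrt (by linarith [hr.2])
      have hd0 : 0 < Real.sqrt (s - r) := lt_of_lt_of_le ha hd
      have hdx : Real.sqrt (s - r) ≤ x := Real.sqrt_le_sqrt (by linarith)
      have hq' : ψ (Real.sqrt (s - r)) ≤ ψ x := hmono (Real.sqrt_nonneg _) hx.le hdx
      have hp : 0 ≤ ψ (Real.sqrt r) := hψnn _ (Real.sqrt_nonneg r)
      have hxd : x ≤ Real.sqrt 2 * Real.sqrt (s - r) := by
        calc x = Real.sqrt 2 * a := hsqrt2a.symm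
        _ ≤ Real.sqrt 2 * Real.sqrt (s - r) :=
          mul_le_mul_of_nonneg_left hd (Real.sqrt_nonneg 2)
      show ψ (Real.sqrt r) * ψ (Real.sqrt (s - r)) / (r * Real.sqrt (s - r)) * (x / ψ x)
        ≤ Real.sqrt 2 * (ψ (Real.sqrt r) / r)
      rw [div_mul_div_comm, mul_div_assoc', div_le_div_iff₀ (by positivity) hr0]
      have h1 : ψ (Real.sqrt (s - r)) * x ≤ ψ x * (Real.sqrt 2 * Real.sqrt (s - r)) :=
        mul_le_mul hq' hxd hx.le hψx.le
      nlinarith [mul_le_mul_of_nonneg_left h1 (mul_nonneg hp hr0.le)]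
    have heq : (∫ r in (0:ℝ)..(s/2), Real.sqrt 2 * (ψ (Real.sqrt r) / r))
        = 2 * Real.sqrt 2 * ∫ u in (0:ℝ)..a, ψ u / u := by
      rw [intervalIntegral.integral_const_mul]
      have e1 : (∫ r in (0:ℝ)..(s/2), ψ (Real.sqrt r) / r)
          = ∫ u in (0:ℝ)..a, 2*u*(ψ (Real.sqrt (u^2)) / u^2) := by
        rw [← ha2]; exact cv_eq ha.le _
      have e2 : (∫ u in (0:ℝ)..a, 2*u*(ψ (Real.sqrt (u^2)) / u^2))
          = ∫ u in (0:ℝ)..a, 2 * (ψ u / u) := by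
        refine intervalIntegral.integral_congr fun u hu => ?_
        rw [uIcc_of_le ha.le] at hu
        rcases eq_or_lt_of_le hu.1 with h | h
        · rw [← h]; simp
        · have hu0 : u ≠ 0 := ne_of_gt h
          rw [Real.sqrt_sq h.le]
          field_simp
      rw [e1, e2, intervalIntegral.integral_const_mul]
      ring
    linarith
  -- Piece 2
  set G : ℝ → ℝ := fun t => 2 * ψ (Real.sqrt t) / (x * Real.sqrt t) with hGdef
  have hBint : IntegrableOn (fun u => 4 * ψ (Real.sqrt (u^2)) / x) (Ioc 0 a) := by
    refine Integrable.mono' (g := fun _ => 4 * ψ a / x)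
      (integrableOn_const measure_Ioc_lt_top.ne)
      (((hmeas1.comp (measurable_id.pow_const 2)).const_mul 4 |>.div_const x)
        |>.aestronglyMeasurable.restrict) ?_
    rw [ae_restrict_iff' measurableSet_Ioc]
    filter_upwards with u hu
    have hnn : 0 ≤ ψ (Real.sqrt (u^2)) := hψnn _ (Real.sqrt_nonneg _)
    have hle : ψ (Real.sqrt (u^2)) ≤ ψ a := by
      rw [Real.sqrt_sq hu.1.le]
      exact hmono hu.1.le ha.le hu.2
    rw [Real.norm_eq_abs, abs_of_nonneg (div_nonneg (by linarith) hx.le)]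
    gcongr
  have h2uG : IntegrableOn (fun u => 2*u*G (u^2)) (Ioc 0 a) := by
    refine (integrableOn_congr_fun (fun u hu => ?_) measurableSet_Ioc).2 hBint
    have hu0 : u ≠ 0 := ne_of_gt hu.1
    show 2*u*(2 * ψ (Real.sqrt (u^2)) / (x * Real.sqrt (u^2))) = 4 * ψ (Real.sqrt (u^2)) / x
    rw [Real.sqrt_sq hu.1.le]
    field_simp
    ring
  have hGs2 : IntervalIntegrable G volume 0 (s/2) := by
    have := (cv_int ha.le G).2 ((intervalIntegrable_iff_integrableOn_Ioc_of_le ha.le).2 h2uG)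
    rwa [ha2] at this
  have hG2 : IntervalIntegrable (fun r => G (s - r)) volume (s/2) s := by
    have h := (hGs2.comp_sub_left s).symm
    rw [sub_zero] at h
    have e : s - s/2 = s/2 := by ring
    rwa [e] at h
  have hP2 : (∫ r in (s/2)..s, F r) ≤ 4 * ∫ u in (0:ℝ)..a, ψ u / u := by
    have hb : (∫ r in (s/2)..s, F r) ≤ ∫ r in (s/2)..s, G (s - r) := by
      rw [intervalIntegral.integral_of_le (by linarith : s/2 ≤ s),
        intervalIntegral.integral_of_le (by linarith : s/2 ≤ s)]
      refine setIntegral_mono_on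
        ((intervalIntegrable_iff_integrableOn_Ioc_of_le (by linarith)).1 hF2)
        ((intervalIntegrable_iff_integrableOn_Ioc_of_le (by linarith)).1 hG2)
        measurableSet_Ioc fun r hr => ?_
      rcases eq_or_lt_of_le hr.2 with h | h
      · rw [h]
        show ψ (Real.sqrt s) * ψ (Real.sqrt (s - s)) / (s * Real.sqrt (s - s)) * (x / ψ x)
          ≤ 2 * ψ (Real.sqrt (s - s)) / (x * Real.sqrt (s - s))
        rw [sub_self, Real.sqrt_zero, mul_zero, mul_zero, div_zero, div_zero, zero_mul]
      · have hr0 : 0 < r := by linarith [hr.1, hs]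
        have hd0 : 0 < Real.sqrt (s - r) := Real.sqrt_pos.2 (by linarith)
        have hpx : ψ (Real.sqrt r) ≤ ψ x :=
          hmono (Real.sqrt_nonneg _) hx.le (Real.sqrt_le_sqrt (by linarith))
        have hp : 0 ≤ ψ (Real.sqrt r) := hψnn _ (Real.sqrt_nonneg r)
        have hqn : 0 ≤ ψ (Real.sqrt (s - r)) := hψnn _ (Real.sqrt_nonneg _)
        show ψ (Real.sqrt r) * ψ (Real.sqrt (s - r)) / (r * Real.sqrt (s - r)) * (x / ψ x)
          ≤ 2 * ψ (Real.sqrt (s - r)) / (x * Real.sqrt (s - r))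
        rw [div_mul_div_comm, div_le_div_iff₀ (by positivity) (by positivity)]
        have hxx : x * x ≤ 2 * r := by nlinarith [hr.1, hx2]
        have h1 : ψ (Real.sqrt r) * (x * x) ≤ ψ x * (2 * r) :=
          mul_le_mul hpx hxx (by positivity) hψx.le
        have H := mul_le_mul_of_nonneg_left h1 (mul_nonneg hqn hd0.le)
        ring_nf at H ⊢
        linarith [H]
    have e0 : (∫ r in (s/2)..s, G (s - r)) = ∫ t in (0:ℝ)..(s/2), G t := by
      rw [intervalIntegral.integral_comp_sub_left G s, sub_self]
      congr 1
      ring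
    have e1 : (∫ t in (0:ℝ)..(s/2), G t) = ∫ u in (0:ℝ)..a, 2*u*G (u^2) := by
      rw [← ha2]; exact cv_eq ha.le _
    have hb2 : (∫ u in (0:ℝ)..a, 2*u*G (u^2)) ≤ ∫ u in (0:ℝ)..a, 4 * (ψ u / u) := by
      rw [intervalIntegral.integral_of_le ha.le, intervalIntegral.integral_of_le ha.le]
      refine setIntegral_mono_on h2uG (hIon.const_mul 4) measurableSet_Ioc fun u hu => ?_
      have hu0 : (0:ℝ) < u := hu.1
      have hux : u ≤ x := le_trans hu.2 hax
      have hpn : 0 ≤ ψ u := hψnn u hu0.le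
      show 2*u*(2 * ψ (Real.sqrt (u^2)) / (x * Real.sqrt (u^2))) ≤ 4 * (ψ u / u)
      rw [Real.sqrt_sq hu0.le]
      have e : 2*u*(2 * ψ u / (x * u)) = 4 * ψ u / x := by
        field_simp
        ring
      rw [e, mul_div_assoc']
      gcongr
    calc (∫ r in (s/2)..s, F r) ≤ ∫ r in (s/2)..s, G (s - r) := hb
    _ = ∫ u in (0:ℝ)..a, 2*u*G (u^2) := by rw [e0, e1]
    _ ≤ ∫ u in (0:ℝ)..a, 4 * (ψ u / u) := hb2
    _ = 4 * ∫ u in (0:ℝ)..a, ψ u / u := intervalIntegral.integral_const_mul _ _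
  rw [← intervalIntegral.integral_add_adjacent_intervals hF1 hF2]
  have hring : 2 * (2 + Real.sqrt 2) * (∫ u in (0:ℝ)..a, ψ u / u)
      = 2 * Real.sqrt 2 * (∫ u in (0:ℝ)..a, ψ u / u)
        + 4 * ∫ u in (0:ℝ)..a, ψ u / u := by ring
  linarith
end

section
/- Let ψ ∈ 𝒜 and m ≥ 1. Then for every s > 0, (√s/ψ(√s)) · (∫₀^s [ψ((s−r)^{1/2})ψ(r^{1/2})/(√r·√(s−r))]^m dr)^{1/m} ≤ 2√2 · (∫₀^{s/2} [ψ(r^{1/2})/√r]^m dr)^{1/m}. -/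
open Set MeasureTheory

lemma aux_Lm
    (φ : ℝ → ℝ) (hmono : Monotone φ) (hnn : ∀ r, 0 ≤ φ r)
    (hposφ : ∀ r > (0:ℝ), 0 < φ r)
    (m : ℝ) (hm : 1 ≤ m) (s : ℝ) (hs : 0 < s) :
    (Real.sqrt s / φ s) *
      (∫ r in (0:ℝ)..s,
          (φ (s - r) * φ r / (Real.sqrt r * Real.sqrt (s - r))) ^ m) ^ (1 / m)
    ≤ 2 * Real.sqrt 2 *
      (∫ r in (0:ℝ)..(s / 2), (φ r / Real.sqrt r) ^ m) ^ (1 / m) := by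
  have hm0 : (0:ℝ) < m := lt_of_lt_of_le one_pos hm
  have hm' : m ≠ 0 := hm0.ne'
  have hs2 : (0:ℝ) < s / 2 := by linarith
  have hss : 0 < Real.sqrt s := Real.sqrt_pos.mpr hs
  have hφs : 0 < φ s := hposφ s hs
  have hφs2 : 0 < φ (s/2) := hposφ _ hs2
  set F : ℝ → ℝ := fun r => φ (s - r) * φ r / (Real.sqrt r * Real.sqrt (s - r)) with hF
  set g : ℝ → ℝ := fun r => φ r / Real.sqrt r with hg
  set C : ℝ := Real.sqrt 2 * φ s / Real.sqrt s with hCdef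
  have hC : 0 < C :=
    div_pos (mul_pos (Real.sqrt_pos.mpr two_pos) hφs) hss
  have hFnn : ∀ r, 0 ≤ F r := fun r =>
    div_nonneg (mul_nonneg (hnn _) (hnn _))
      (mul_nonneg (Real.sqrt_nonneg _) (Real.sqrt_nonneg _))
  have hgnn : ∀ r, 0 ≤ g r := fun r => div_nonneg (hnn _) (Real.sqrt_nonneg _)
  set I : ℝ := ∫ r in (0:ℝ)..(s/2), g r ^ m with hI
  have hInn : 0 ≤ I :=
    intervalIntegral.integral_nonneg (by linarith)
      (fun r _ => Real.rpow_nonneg (hgnn r) m)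
  -- pointwise bounds on Ioc 0 (s/2)
  have hfactor : ∀ r, F r = (φ (s - r) / Real.sqrt (s - r)) * g r := by
    intro r
    rw [hF, hg]
    simp only []
    rw [div_mul_div_comm]
    ring_nf
  have hpt : ∀ r ∈ Ioc (0:ℝ) (s/2), F r ≤ C * g r := by
    intro r hr
    have hsr : s / 2 ≤ s - r := by linarith [hr.2]
    have h1 : φ (s - r) / Real.sqrt (s - r) ≤ C := by
      have hb : φ (s - r) ≤ φ s := hmono (by linarith [hr.1])
      have hd : Real.sqrt (s/2) ≤ Real.sqrt (s - r) := Real.sqrt_le_sqrt hsr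
      have hd0 : 0 < Real.sqrt (s/2) := Real.sqrt_pos.mpr hs2
      have h2 : φ (s - r) / Real.sqrt (s - r) ≤ φ s / Real.sqrt (s/2) :=
        div_le_div₀ (hnn s) hb hd0 hd
      refine h2.trans_eq ?_
      rw [hCdef, Real.sqrt_div hs.le 2]
      have h2' : Real.sqrt 2 ≠ 0 := (Real.sqrt_pos.mpr two_pos).ne'
      field_simp
    rw [hfactor r]
    exact mul_le_mul_of_nonneg_right h1 (hgnn r)
  have hpt2 : ∀ r ∈ Ioc (0:ℝ) (s/2), g r ≤ (Real.sqrt s / φ (s/2)) * F r := by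
    intro r hr
    have hsr : s / 2 ≤ s - r := by linarith [hr.2]
    have h1 : φ (s/2) / Real.sqrt s ≤ φ (s - r) / Real.sqrt (s - r) := by
      apply div_le_div₀ (hnn _) (hmono hsr) (Real.sqrt_pos.mpr (by linarith [hr.2]))
      exact Real.sqrt_le_sqrt (by linarith [hr.1])
    have h2 : (φ (s/2) / Real.sqrt s) * g r ≤ F r := by
      rw [hfactor r]
      exact mul_le_mul_of_nonneg_right h1 (hgnn r)
    have h3 := mul_le_mul_of_nonneg_left h2 (le_of_lt (div_pos hss hφs2))
    calc g r = (Real.sqrt s / φ (s/2)) * ((φ (s/2) / Real.sqrt s) * g r) := by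
              field_simp
      _ ≤ (Real.sqrt s / φ (s/2)) * F r := h3
  -- the key integral inequality
  have hJ : (∫ r in (0:ℝ)..s, F r ^ m) ≤ 2 * (C ^ m * I) := by
    by_cases HF : IntervalIntegrable (fun r => F r ^ m) volume 0 s
    · have hsub1 : IntervalIntegrable (fun r => F r ^ m) volume 0 (s/2) :=
        HF.mono_set (by
          rw [uIcc_of_le (by linarith : (0:ℝ) ≤ s/2), uIcc_of_le hs.le]
          exact Icc_subset_Icc le_rfl (by linarith))
      have hsub2 : IntervalIntegrable (fun r => F r ^ m) volume (s/2) s :=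
        HF.mono_set (by
          rw [uIcc_of_le (by linarith : (s/2:ℝ) ≤ s), uIcc_of_le hs.le]
          exact Icc_subset_Icc (by linarith) le_rfl)
      have hsym : (∫ r in (s/2)..s, F r ^ m) = ∫ r in (0:ℝ)..(s/2), F r ^ m := by
        have hFsym : ∀ x, F (s - x) = F x := by
          intro x
          rw [hF]
          simp only [sub_sub_cancel]
          ring
        have := intervalIntegral.integral_comp_sub_left
          (a := (0:ℝ)) (b := s/2) (fun x => F x ^ m) s
        simp only [sub_zero] at this
        rw [show s - s/2 = s/2 by ring] at this
        rw [← this]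
        apply intervalIntegral.integral_congr
        intro x _
        simp [hFsym x]
      -- integrability of g^m on [0, s/2]
      have hFnnm : ∀ r, 0 ≤ F r ^ m := fun r => Real.rpow_nonneg (hFnn r) m
      have hgint : IntervalIntegrable (fun r => g r ^ m) volume 0 (s/2) := by
        rw [intervalIntegrable_iff_integrableOn_Ioc_of_le (by linarith)] at hsub1 ⊢
        have hgm : Measurable g := hmono.measurable.div Real.continuous_sqrt.measurable
        have hmeas : Measurable fun r => g r ^ m := hgm.pow measurable_const
        refine Integrable.mono' (hsub1.const_mul ((Real.sqrt s / φ (s/2)) ^ m))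
          hmeas.aestronglyMeasurable.restrict ?_
        filter_upwards [ae_restrict_mem measurableSet_Ioc] with r hr
        have h1 : g r ≤ (Real.sqrt s / φ (s/2)) * F r := hpt2 r hr
        have h2 : g r ^ m ≤ ((Real.sqrt s / φ (s/2)) * F r) ^ m :=
          Real.rpow_le_rpow (hgnn r) h1 hm0.le
        rw [Real.norm_of_nonneg (Real.rpow_nonneg (hgnn r) m)]
        refine h2.trans_eq ?_
        rw [Real.mul_rpow (le_of_lt (div_pos hss hφs2)) (hFnn r)]
      -- compare: ∫₀^{s/2} F^m ≤ C^m * I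
      have hcomp : (∫ r in (0:ℝ)..(s/2), F r ^ m) ≤ C ^ m * I := by
        have hCg : IntervalIntegrable (fun r => C ^ m * g r ^ m) volume 0 (s/2) :=
          hgint.const_mul _
        have hmono' : ∀ r ∈ Icc (0:ℝ) (s/2), F r ^ m ≤ C ^ m * g r ^ m := by
          intro r hr
          rcases eq_or_lt_of_le hr.1 with h0 | h0
          · have hF0 : F r = 0 := by
              rw [hF, ← h0]
              simp [Real.sqrt_zero]
            have hg0 : g r = 0 := by
              rw [hg, ← h0]
              simp [Real.sqrt_zero]
            rw [hF0, hg0, Real.zero_rpow hm']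
            simp
          · have h1 : F r ≤ C * g r := hpt r ⟨h0, hr.2⟩
            have h2 : F r ^ m ≤ (C * g r) ^ m :=
              Real.rpow_le_rpow (hFnn r) h1 hm0.le
            refine h2.trans_eq ?_
            rw [Real.mul_rpow hC.le (hgnn r)]
        calc (∫ r in (0:ℝ)..(s/2), F r ^ m)
            ≤ ∫ r in (0:ℝ)..(s/2), C ^ m * g r ^ m :=
              intervalIntegral.integral_mono_on (by linarith) hsub1 hCg hmono'
          _ = C ^ m * I := by rw [hI, intervalIntegral.integral_const_mul]
      calc (∫ r in (0:ℝ)..s, F r ^ m)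
          = (∫ r in (0:ℝ)..(s/2), F r ^ m) + ∫ r in (s/2)..s, F r ^ m :=
            (intervalIntegral.integral_add_adjacent_intervals hsub1 hsub2).symm
        _ = 2 * ∫ r in (0:ℝ)..(s/2), F r ^ m := by rw [hsym]; ring
        _ ≤ 2 * (C ^ m * I) := by linarith [hcomp]
    · rw [intervalIntegral.integral_undef HF]
      positivity
  -- finish
  have hJnn : 0 ≤ ∫ r in (0:ℝ)..s, F r ^ m :=
    intervalIntegral.integral_nonneg hs.le (fun r _ => Real.rpow_nonneg (hFnn r) m)
  have hstep : (∫ r in (0:ℝ)..s, F r ^ m) ^ (1/m) ≤ (2:ℝ) ^ (1/m) * (C * I ^ (1/m)) := by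
    have h1 : (∫ r in (0:ℝ)..s, F r ^ m) ^ (1/m) ≤ (2 * (C ^ m * I)) ^ (1/m) :=
      Real.rpow_le_rpow hJnn hJ (by positivity)
    refine h1.trans_eq ?_
    rw [Real.mul_rpow (by norm_num) (by positivity),
        Real.mul_rpow (Real.rpow_nonneg hC.le m) hInn,
        ← Real.rpow_mul hC.le, mul_one_div_cancel hm', Real.rpow_one]
  have h2m : (2:ℝ) ^ (1/m) ≤ 2 := by
    have : (1:ℝ)/m ≤ 1 := by
      rw [div_le_one hm0]; exact hm
    calc (2:ℝ) ^ (1/m) ≤ (2:ℝ) ^ (1:ℝ) :=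
          Real.rpow_le_rpow_of_exponent_le one_le_two this
      _ = 2 := Real.rpow_one 2
  calc (Real.sqrt s / φ s) * (∫ r in (0:ℝ)..s, F r ^ m) ^ (1/m)
      ≤ (Real.sqrt s / φ s) * ((2:ℝ) ^ (1/m) * (C * I ^ (1/m))) :=
        mul_le_mul_of_nonneg_left hstep (by positivity)
    _ = (2:ℝ) ^ (1/m) * (Real.sqrt 2 * I ^ (1/m)) := by
        rw [hCdef]
        field_simp
    _ ≤ 2 * (Real.sqrt 2 * I ^ (1/m)) := by
        apply mul_le_mul_of_nonneg_right h2m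
        positivity
    _ = 2 * Real.sqrt 2 * I ^ (1/m) := by ring

theorem Lm_splitting_estimate
    (ψ : ℝ → ℝ)
    (hmono : MonotoneOn ψ (Ici 0))
    (hconc : ConcaveOn ℝ (Ici 0) ψ)
    (hpos : ∀ r > (0:ℝ), 0 < ψ r) (h0 : 0 ≤ ψ 0)
    (m : ℝ) (hm : 1 ≤ m) :
    ∀ s > (0:ℝ),
      (Real.sqrt s / ψ (Real.sqrt s)) *
        (∫ r in (0:ℝ)..s,
            (ψ (Real.sqrt (s - r)) * ψ (Real.sqrt r)
              / (Real.sqrt r * Real.sqrt (s - r))) ^ m) ^ (1 / m)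
      ≤ 2 * Real.sqrt 2 *
        (∫ r in (0:ℝ)..(s / 2), (ψ (Real.sqrt r) / Real.sqrt r) ^ m) ^ (1 / m) := by
  intro s hs
  have hφmono : Monotone (fun r => ψ (Real.sqrt r)) := by
    intro a b hab
    exact hmono (mem_Ici.mpr (Real.sqrt_nonneg a)) (mem_Ici.mpr (Real.sqrt_nonneg b))
      (Real.sqrt_le_sqrt hab)
  have hφnn : ∀ r, 0 ≤ ψ (Real.sqrt r) := by
    intro r
    rcases eq_or_lt_of_le (Real.sqrt_nonneg r) with h | h
    · rw [← h]; exact h0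
    · exact le_of_lt (hpos _ h)
  have hφpos : ∀ r > (0:ℝ), 0 < ψ (Real.sqrt r) := by
    intro r hr
    exact hpos _ (Real.sqrt_pos.mpr hr)
  exact aux_Lm (fun r => ψ (Real.sqrt r)) hφmono hφnn hφpos m hm s hs
end

section
/- Suppose two families of probability kernels satisfy the gradient estimate sup_{[f]_ψ ≤ 1} ‖∇P_{r,t}f‖_∞ ≤ c·(t−r)^{−1/2}·ψ((t−r)^{1/2}) for all 0 ≤ r < t ≤ T, and a density gradient bound ∫_{ℝ^d} |∇_y p_{s,r}(x,y)| dy ≤ C·(r−s)^{−1/2}. Then for bounded measurable coefficient differences A(r) := ‖a₁−a₂‖_{r,∞} and B(r) := ‖b₁−b₂‖_{r,∞} + ‖div(a₁−a₂)‖_{r,∞}, the duality term ∫_s^t [ψ((t−r)^{1/2})/√(t−r)]·(A(r)·C/√(r−s) + B(r)) dr bounds the pairing |∫_s^t ∫ p_{s,r}(x,y)(L_r^{1}−L_r^{2})P_{r,t}f(y) dy dr| for [f]_ψ ≤ 1, after integration by parts in the second-order term. -/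
open Set MeasureTheory RealInnerProductSpace

/-- After integration by parts in the second-order term, the coefficient-difference
pairing between two generators, tested against the transition density and the
gradient of the semigroup, is bounded by the singular duality term. -/
theorem pairing_duality_bound (d : ℕ) (hd : 1 ≤ d)
    (ψ : ℝ → ℝ)
    (hmono : MonotoneOn ψ (Ici 0))
    (hconc : ConcaveOn ℝ (Ici 0) ψ)
    (hψpos : ∀ r > (0:ℝ), 0 < ψ r) (hψ0 : 0 ≤ ψ 0)
    (s t c C : ℝ) (hst : s < t) (hc : 0 ≤ c) (hC : 0 ≤ C)
    (A B : ℝ → ℝ) (hA : ∀ r, 0 ≤ A r) (hB : ∀ r, 0 ≤ B r)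
    -- p = transition density p_{s,·}(x,·), Dp = ∇_y p, amap = a₁ - a₂,
    -- diva = div(a₁-a₂), bdiff = b₁ - b₂, G = ∇P_{·,t}f
    (p : ℝ → EuclideanSpace ℝ (Fin d) → ℝ)
    (Dp : ℝ → EuclideanSpace ℝ (Fin d) → EuclideanSpace ℝ (Fin d))
    (amap : ℝ → EuclideanSpace ℝ (Fin d) →
      (EuclideanSpace ℝ (Fin d) →L[ℝ] EuclideanSpace ℝ (Fin d)))
    (diva bdiff : ℝ → EuclideanSpace ℝ (Fin d) → EuclideanSpace ℝ (Fin d))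
    (G : ℝ → EuclideanSpace ℝ (Fin d) → EuclideanSpace ℝ (Fin d))
    (hp : ∀ r y, 0 ≤ p r y)
    (hpint : ∀ r ∈ Ioo s t, ∫ y, p r y = 1)
    (hpInt : ∀ r ∈ Ioo s t, Integrable (p r))
    (hDpL1 : ∀ r ∈ Ioo s t, Integrable (fun y => ‖Dp r y‖))
    (hDp : ∀ r ∈ Ioo s t, (∫ y, ‖Dp r y‖) ≤ C * (r - s) ^ (-(1:ℝ)/2))
    -- gradient estimate sup_{[f]_ψ ≤ 1} ‖∇P_{r,t} f‖_∞ ≤ c (t-r)^{-1/2} ψ(√(t-r))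
    (hG : ∀ r ∈ Ioo s t, ∀ y, ‖G r y‖ ≤ c * (t - r) ^ (-(1:ℝ)/2) * ψ (Real.sqrt (t - r)))
    (ha : ∀ r y, ‖amap r y‖ ≤ A r)
    (hbd : ∀ r y, ‖diva r y‖ + ‖bdiff r y‖ ≤ B r)
    (Φ : ℝ → ℝ)
    -- the pairing ∫ p (L¹-L²)P_{r,t}f dy, rewritten by integration by parts
    (hΦ : ∀ r ∈ Ioo s t, Φ r =
      ∫ y, (⟪amap r y (Dp r y) + p r y • diva r y, G r y⟫
              + p r y * ⟪bdiff r y, G r y⟫))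
    (hΦint : IntervalIntegrable Φ volume s t)
    (hint2 : IntervalIntegrable
      (fun r => ψ (Real.sqrt (t - r)) / Real.sqrt (t - r)
        * (A r * C / Real.sqrt (r - s) + B r)) volume s t) :
    |∫ r in s..t, Φ r|
      ≤ c * ∫ r in s..t,
          ψ (Real.sqrt (t - r)) / Real.sqrt (t - r)
            * (A r * C / Real.sqrt (r - s) + B r) := by

  set g : ℝ → ℝ := fun r => ψ (Real.sqrt (t - r)) / Real.sqrt (t - r)
        * (A r * C / Real.sqrt (r - s) + B r) with hgdef
  have hg0 : ∀ r, 0 ≤ g r := by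
    intro r
    have hψnn : 0 ≤ ψ (Real.sqrt (t - r)) := by
      rcases eq_or_lt_of_le (Real.sqrt_nonneg (t - r)) with h | h
      · rwa [← h]
      · exact (hψpos _ h).le
    exact mul_nonneg (div_nonneg hψnn (Real.sqrt_nonneg _))
      (add_nonneg (div_nonneg (mul_nonneg (hA r) hC) (Real.sqrt_nonneg _)) (hB r))
  have key : ∀ r ∈ Ioo s t, |Φ r| ≤ c * g r := by
    intro r hr
    obtain ⟨hsr, hrt⟩ := hr
    have htr : (0:ℝ) < t - r := by linarith
    have hrs : (0:ℝ) < r - s := by linarith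
    have hψnn : 0 ≤ ψ (Real.sqrt (t - r)) := (hψpos _ (Real.sqrt_pos.2 htr)).le
    set M := c * (t - r) ^ (-(1:ℝ)/2) * ψ (Real.sqrt (t - r)) with hM
    have hM0 : 0 ≤ M := mul_nonneg (mul_nonneg hc (Real.rpow_nonneg htr.le _)) hψnn
    have hbound : ∀ y, ‖(⟪amap r y (Dp r y) + p r y • diva r y, G r y⟫
              + p r y * ⟪bdiff r y, G r y⟫ : ℝ)‖
          ≤ M * (A r * ‖Dp r y‖ + B r * p r y) := by
      intro y
      have hGb := hG r ⟨hsr, hrt⟩ y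
      have h1 : ‖(⟪amap r y (Dp r y) + p r y • diva r y, G r y⟫ : ℝ)‖
          ≤ (A r * ‖Dp r y‖ + p r y * ‖diva r y‖) * ‖G r y‖ := by
        refine (norm_inner_le_norm _ _).trans ?_
        gcongr
        refine (norm_add_le _ _).trans ?_
        gcongr
        · exact (ContinuousLinearMap.le_opNorm _ _).trans
            (mul_le_mul_of_nonneg_right (ha r y) (norm_nonneg _))
        · rw [norm_smul, Real.norm_eq_abs, abs_of_nonneg (hp r y)]
      have h2 : ‖(p r y * ⟪bdiff r y, G r y⟫ : ℝ)‖
          ≤ p r y * ‖bdiff r y‖ * ‖G r y‖ := by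
        rw [norm_mul, Real.norm_eq_abs, abs_of_nonneg (hp r y), mul_assoc]
        gcongr
        · exact hp r y
        · exact norm_inner_le_norm (𝕜 := ℝ) (bdiff r y) (G r y)
      calc ‖(⟪amap r y (Dp r y) + p r y • diva r y, G r y⟫
              + p r y * ⟪bdiff r y, G r y⟫ : ℝ)‖
          ≤ (A r * ‖Dp r y‖ + p r y * ‖diva r y‖) * ‖G r y‖
              + p r y * ‖bdiff r y‖ * ‖G r y‖ :=
            (norm_add_le _ _).trans (add_le_add h1 h2)
        _ = (A r * ‖Dp r y‖ + p r y * (‖diva r y‖ + ‖bdiff r y‖)) * ‖G r y‖ := by ring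
        _ ≤ (A r * ‖Dp r y‖ + p r y * B r) * M := by
            refine mul_le_mul ?_ hGb (norm_nonneg _) ?_
            · gcongr
              · exact hp r y
              · exact hbd r y
            · exact add_nonneg (mul_nonneg (hA r) (norm_nonneg _))
                (mul_nonneg (hp r y) (hB r))
        _ = M * (A r * ‖Dp r y‖ + B r * p r y) := by ring
    have hIntDp := hDpL1 r ⟨hsr, hrt⟩
    have hIntp := hpInt r ⟨hsr, hrt⟩
    have hIntg : Integrable (fun y => M * (A r * ‖Dp r y‖ + B r * p r y)) :=
      ((hIntDp.const_mul (A r)).add (hIntp.const_mul (B r))).const_mul M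
    rw [hΦ r ⟨hsr, hrt⟩, ← Real.norm_eq_abs]
    calc ‖∫ y, (⟪amap r y (Dp r y) + p r y • diva r y, G r y⟫
              + p r y * ⟪bdiff r y, G r y⟫ : ℝ)‖
        ≤ ∫ y, M * (A r * ‖Dp r y‖ + B r * p r y) :=
          norm_integral_le_of_norm_le hIntg (ae_of_all _ hbound)
      _ = M * (A r * (∫ y, ‖Dp r y‖) + B r * 1) := by
          rw [integral_const_mul, integral_add (hIntDp.const_mul (A r))
            (hIntp.const_mul (B r)), integral_const_mul, integral_const_mul,
            hpint r ⟨hsr, hrt⟩]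
      _ ≤ M * (A r * (C * (r - s) ^ (-(1:ℝ)/2)) + B r) := by
          rw [mul_one]
          gcongr
          · exact hA r
          · exact hDp r ⟨hsr, hrt⟩
      _ = c * g r := by
          have e1 : (t - r) ^ (-(1:ℝ)/2) = (Real.sqrt (t - r))⁻¹ := by
            rw [Real.sqrt_eq_rpow, ← Real.rpow_neg htr.le]
            norm_num
          have e2 : (r - s) ^ (-(1:ℝ)/2) = (Real.sqrt (r - s))⁻¹ := by
            rw [Real.sqrt_eq_rpow, ← Real.rpow_neg hrs.le]
            norm_num
          simp only [hM, hgdef, e1, e2]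
          field_simp
  have hae : ∀ᵐ r ∂volume.restrict (uIoc s t), ‖Φ r‖ ≤ c * g r := by
    rw [uIoc_of_le hst.le]
    have hne : ∀ᵐ r ∂volume.restrict (Ioc s t), r ≠ t :=
      ae_restrict_of_ae (by
        refine ae_iff.2 ?_
        simp only [ne_eq, not_not, setOf_eq_eq_singleton]
        exact Real.volume_singleton)
    filter_upwards [ae_restrict_mem measurableSet_Ioc, hne] with r hr hrne
    rw [Real.norm_eq_abs]
    exact key r ⟨hr.1, lt_of_le_of_ne hr.2 hrne⟩
  have hcg : IntervalIntegrable (fun r => c * g r) volume s t := hint2.const_mul c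
  calc |∫ r in s..t, Φ r| ≤ |∫ r in s..t, c * g r| := by
        rw [← Real.norm_eq_abs (∫ r in s..t, Φ r)]
        exact intervalIntegral.norm_integral_le_abs_of_norm_le hae hcg
    _ = ∫ r in s..t, c * g r := abs_of_nonneg <|
        intervalIntegral.integral_nonneg hst.le fun r _ => mul_nonneg hc (hg0 r)
    _ = c * ∫ r in s..t, g r := intervalIntegral.integral_const_mul c g
end
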